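/- Let X be a nonempty finite type and ⊵ an irreflexive relation on X. Then for every pair (a,b) ∈ X × X, the following are equivalent: (i) there exists a ⊵-submonotone distribution h over latent preference types with p_h(a,b) > 0; (ii) ¬(a ⊵ b). Equivalently, the set of instrument-response types realizable under ⊵-submonotonicity is exactly the complement of {(a,b) | a ⊵ b}, so this complement is the minimal response-type restriction implied by ⊵-submonotonicity. -/

import Mathlib

open scoped NNReal

/-- A latent preference type on `X`: a pair of strict preferences (strict total orders),
the unit's preferences at the two values of a binary instrument. -/
def LatentPref (X : Type*) : Type _ :=
  {pr : (X → X → Prop) × (X → X → Prop) //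
    IsStrictTotalOrder X pr.1 ∧ IsStrictTotalOrder X pr.2}

/-- A pair of preferences `(r₀, r₁)` is `⊵`-submonotone (no preference reversals against
the relation `tr`): whenever `tr a b` and `a` is `r₀`-preferred to `b`, `a` remains
`r₁`-preferred to `b`. -/
def SubmonoPair {X : Type*} (tr : X → X → Prop)
    (pr : (X → X → Prop) × (X → X → Prop)) : Prop :=
  ∀ a b : X, tr a b → pr.1 a b → pr.2 a b

/-- `m` is the greatest element of the strict preference `r` (the rational choice). -/
def GreatestElem {X : Type*} (r : X → X → Prop) (m : X) : Prop :=
  ∀ x : X, x ≠ m → r m x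

/-- A distribution over latent preference types: nonnegative weights of total mass one
(the set of latent preference types over a finite `X` is finite). -/
def IsPrefDist {X : Type*} (h : LatentPref X → ℝ≥0) : Prop :=
  ∑ᶠ pr : LatentPref X, h pr = 1

/-- A `⊵`-submonotone distribution over latent preference types: a distribution that
vanishes on every pair of preferences that is not `⊵`-submonotone. -/
def SubmonoDist {X : Type*} (tr : X → X → Prop) (h : LatentPref X → ℝ≥0) : Prop :=
  IsPrefDist h ∧ ∀ pr : LatentPref X, ¬ SubmonoPair tr pr.1 → h pr = 0

/-- The distribution over instrument-response types induced by a distribution over latent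
preference types: `inducedIR h x x'` is the total weight of latent preference types whose
first preference has greatest element `x` and whose second has greatest element `x'`. -/
noncomputable def inducedIR {X : Type*} (h : LatentPref X → ℝ≥0) (x x' : X) : ℝ≥0 :=
  ∑ᶠ (pr : LatentPref X)
    (_ : GreatestElem pr.1.1 x ∧ GreatestElem pr.1.2 x'), h pr

section AuxProof

variable {X : Type*}

/-- Promote `m` to the top of the strict order `r`. -/
def prom (m : X) (r : X → X → Prop) (x y : X) : Prop :=
  (x = m ∧ y ≠ m) ∨ (x ≠ m ∧ y ≠ m ∧ r x y)

lemma prom_sto (m : X) {r : X → X → Prop} (hr : IsStrictTotalOrder X r) :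
    IsStrictTotalOrder X (prom m r) := by
  refine { trichotomous := ?_, irrefl := ?_, trans := ?_ }
  · intro x y
    suffices H : prom m r x y ∨ x = y ∨ prom m r y x by tauto
    rcases (haveI := hr; trichotomous_of r x y) with h | h | h
    · by_cases hx : x = m
      · by_cases hy : y = m
        · exact Or.inr (Or.inl (hy ▸ hx))
        · exact Or.inl (Or.inl ⟨hx, hy⟩)
      · by_cases hy : y = m
        · exact Or.inr (Or.inr (Or.inl ⟨hy, hx⟩))
        · exact Or.inl (Or.inr ⟨hx, hy, h⟩)
    · exact Or.inr (Or.inl h)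
    · by_cases hx : x = m
      · by_cases hy : y = m
        · exact Or.inr (Or.inl (hy ▸ hx))
        · exact Or.inl (Or.inl ⟨hx, hy⟩)
      · by_cases hy : y = m
        · exact Or.inr (Or.inr (Or.inl ⟨hy, hx⟩))
        · exact Or.inr (Or.inr (Or.inr ⟨hy, hx, h⟩))
  · intro x hx
    rcases hx with ⟨h1, h2⟩ | ⟨_, _, h3⟩
    · exact h2 h1
    · exact hr.irrefl x h3
  · intro x y z hxy hyz
    rcases hxy with ⟨hx, hy⟩ | ⟨hx, hy, hxy⟩
    · rcases hyz with ⟨hy', _⟩ | ⟨_, hz, _⟩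
      · exact absurd hy' hy
      · exact Or.inl ⟨hx, hz⟩
    · rcases hyz with ⟨hy', _⟩ | ⟨_, hz, hyz⟩
      · exact absurd hy' hy
      · exact Or.inr ⟨hx, hz, hr.trans _ _ _ hxy hyz⟩

lemma prom_greatest (m : X) (r : X → X → Prop) : GreatestElem (prom m r) m :=
  fun x hx => Or.inl ⟨rfl, hx⟩

end AuxProof

/-- For an irreflexive relation `⊵` on a nonempty finite type, an
instrument-response type `(a, b)` is realizable with positive probability under some
`⊵`-submonotone distribution over latent preference types if and only if `¬ (a ⊵ b)`:
the complement of `{(a,b) | a ⊵ b}` is exactly the minimal response-type restriction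
implied by `⊵`-submonotonicity. -/
theorem submonotone_minimal_restriction
    {X : Type*} [Fintype X] [Nonempty X]
    (tr : X → X → Prop) (hirr : ∀ a : X, ¬ tr a a) :
    ∀ a b : X,
      (∃ h : LatentPref X → ℝ≥0, SubmonoDist tr h ∧ 0 < inducedIR h a b) ↔ ¬ tr a b := by
  classical
  intro a b
  constructor
  · rintro ⟨h, ⟨_, hvanish⟩, hpos⟩ htab
    -- find a latent type with positive weight realizing (a,b)
    have hex : ∃ pr : LatentPref X,
        (GreatestElem pr.1.1 a ∧ GreatestElem pr.1.2 b) ∧ h pr ≠ 0 := by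
      by_contra hno
      push_neg at hno
      have : inducedIR h a b = 0 := by
        unfold inducedIR
        have : ∀ pr : LatentPref X,
            (∑ᶠ _ : GreatestElem pr.1.1 a ∧ GreatestElem pr.1.2 b, h pr) = 0 := by
          intro pr
          by_cases hP : GreatestElem pr.1.1 a ∧ GreatestElem pr.1.2 b
          · rw [hno pr hP]
            simp
          · rw [finsum_eq_if, if_neg hP]
        simp only [this, finsum_zero]
      rw [this] at hpos
      exact lt_irrefl 0 hpos
    obtain ⟨pr, ⟨hga, hgb⟩, hne⟩ := hex
    have hsub : SubmonoPair tr pr.1 := by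
      by_contra hns
      exact hne (hvanish pr hns)
    have hab : a ≠ b := by
      rintro rfl
      exact hirr a htab
    have h1 : pr.1.1 a b := hga b (Ne.symm hab)
    have h2 : pr.1.2 a b := hsub a b htab h1
    have h3 : pr.1.2 b a := hgb a hab
    exact pr.2.2.irrefl a (pr.2.2.trans _ _ _ h2 h3)
  · intro htab
    set s : X → X → Prop := WellOrderingRel with hs
    have hssto : IsStrictTotalOrder X s := inferInstance
    have sto0 : IsStrictTotalOrder X (prom a (prom b s)) :=
      prom_sto a (prom_sto b hssto)
    have sto1 : IsStrictTotalOrder X (prom b (prom a s)) :=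
      prom_sto b (prom_sto a hssto)
    set pr₀ : LatentPref X :=
      ⟨(prom a (prom b s), prom b (prom a s)), sto0, sto1⟩ with hpr₀
    have hsub : SubmonoPair tr pr₀.1 := by
      rintro x y hxy (⟨rfl, hy⟩ | ⟨hx, hy, (⟨hxb, hyb⟩ | ⟨hxb, hyb, hsxy⟩)⟩)
      · -- x = a
        have hyb : y ≠ b := by
          rintro rfl
          exact htab hxy
        by_cases hab : x = b
        · exact Or.inl ⟨hab, hyb⟩
        · exact Or.inr ⟨hab, hyb, Or.inl ⟨rfl, hy⟩⟩
      · exact Or.inl ⟨hxb, hyb⟩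
      · exact Or.inr ⟨hxb, hyb, Or.inr ⟨hx, hy, hsxy⟩⟩
    refine ⟨fun pr => if pr = pr₀ then 1 else 0, ⟨?_, ?_⟩, ?_⟩
    · unfold IsPrefDist
      rw [finsum_eq_single _ pr₀ (fun x hx => if_neg hx)]
      simp
    · intro pr hns
      by_cases hpr : pr = pr₀
      · exact absurd (hpr ▸ hsub) hns
      · exact if_neg hpr
    · have hP : GreatestElem pr₀.1.1 a ∧ GreatestElem pr₀.1.2 b :=
        ⟨prom_greatest a _, prom_greatest b _⟩
      have : inducedIR (fun pr => if pr = pr₀ then 1 else 0) a b = 1 := by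
        unfold inducedIR
        rw [finsum_eq_single _ pr₀ (fun x hx => by simp [hx])]
        rw [finsum_eq_if, if_pos hP]
        simp
      rw [this]
      exact one_pos
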